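/- arXiv:1512.03005 — 3 statements merged into one kernel-verified Lean document; each statement's English description precedes it below -/
import Mathlib

section
/- Let G be a connected weak framework for a matroid M and let H be a non-empty subgraph of G. Then |V(H)| − r_M(E(H)) ≥ |V(G)| − r(M). -/
open Set Matroid
open scoped Classical

namespace QuasiGraphicPaper

universe u v

/-- A finite multigraph: a set `V` of vertices (in an ambient type `α`), a set `E` of
edges (in an ambient type `β`), and an incidence function assigning to each edge an
unordered pair of endpoints; loop-edges and parallel edges are allowed. -/
structure Graph (α : Type u) (β : Type v) where
  V : Set α
  E : Set β
  ends : β → Sym2 α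
  finV : V.Finite
  finE : E.Finite
  ends_mem : ∀ ⦃e⦄, e ∈ E → ∀ ⦃x⦄, x ∈ ends e → x ∈ V

namespace Graph

variable {α : Type u} {β : Type v}

/-- `e` is a loop-edge of `G` at the vertex `v`. -/
def IsLoopAt (G : Graph α β) (e : β) (v : α) : Prop :=
  e ∈ G.E ∧ G.ends e = Sym2.diag v

/-- `loops_G(v)`: the set of loop-edges of `G` at `v`. -/
def loopsAt (G : Graph α β) (v : α) : Set β := {e | G.IsLoopAt e v}

/-- Two vertices are adjacent if some edge of `G` has them as its two endpoints. -/
def Adj (G : Graph α β) (u v : α) : Prop := ∃ e ∈ G.E, G.ends e = s(u, v)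

/-- A graph is connected if any two of its vertices are joined by a walk.
(The graph with no vertices is connected.) -/
def Connected (G : Graph α β) : Prop :=
  ∀ u ∈ G.V, ∀ v ∈ G.V, Relation.ReflTransGen G.Adj u v

/-- Delete a set `X` of vertices: remove the vertices in `X` and all edges meeting `X`. -/
def deleteVertices (G : Graph α β) (X : Set α) : Graph α β where
  V := G.V \ X
  E := {e ∈ G.E | ∀ x ∈ G.ends e, x ∉ X}
  ends := G.ends
  finV := G.finV.diff
  finE := G.finE.subset (sep_subset _ _)
  ends_mem := fun e he x hx => ⟨G.ends_mem he.1 hx, he.2 x hx⟩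

/-- `G − v`: delete the single vertex `v`. -/
abbrev deleteVertex (G : Graph α β) (v : α) : Graph α β := G.deleteVertices {v}

/-- `G − e`: delete the edge `e` (keeping all vertices). -/
def deleteEdge (G : Graph α β) (e : β) : Graph α β where
  V := G.V
  E := G.E \ {e}
  ends := G.ends
  finV := G.finV
  finE := G.finE.diff
  ends_mem := fun f hf x hx => G.ends_mem hf.1 hx

/-- `G[X]`: the subgraph of `G` with edge set `X` (intersected with `E(G)`) and
no isolated vertices. -/
def restrictEdges (G : Graph α β) (X : Set β) : Graph α β where
  V := {v | ∃ e ∈ X ∩ G.E, v ∈ G.ends e}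
  E := X ∩ G.E
  ends := G.ends
  finV := G.finV.subset (by rintro v ⟨e, ⟨-, he⟩, hv⟩; exact G.ends_mem he hv)
  finE := G.finE.subset inter_subset_right
  ends_mem := fun e he x hx => ⟨e, he, hx⟩

/-- The connected component of `G` containing the vertex `v`, as a graph. -/
def componentOf (G : Graph α β) (v : α) : Graph α β where
  V := {u ∈ G.V | Relation.ReflTransGen G.Adj v u}
  E := {e ∈ G.E | ∀ x ∈ G.ends e, Relation.ReflTransGen G.Adj v x}
  ends := G.ends
  finV := G.finV.subset (sep_subset _ _)
  finE := G.finE.subset (sep_subset _ _)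
  ends_mem := fun e he x hx => ⟨G.ends_mem he.1 hx, he.2 x hx⟩

/-- `H` is a connected component of `G`. -/
def IsComponentOf (H G : Graph α β) : Prop := ∃ v ∈ G.V, H = G.componentOf v

/-- The number of connected components of `G`. -/
noncomputable def ncomponents (G : Graph α β) : ℕ :=
  {H : Graph α β | H.IsComponentOf G}.ncard

/-- `G` has at most two connected components: among any three vertices, two are joined. -/
def AtMostTwoComponents (G : Graph α β) : Prop :=
  ∀ u ∈ G.V, ∀ v ∈ G.V, ∀ w ∈ G.V,
    Relation.ReflTransGen G.Adj u v ∨ Relation.ReflTransGen G.Adj u w ∨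
      Relation.ReflTransGen G.Adj v w

/-- The degree of a vertex: loop-edges count twice. -/
noncomputable def degree (G : Graph α β) (v : α) : ℕ :=
  ({e ∈ G.E | v ∈ G.ends e ∧ ¬ (G.ends e).IsDiag}).ncard +
    2 * ({e ∈ G.E | G.ends e = Sym2.diag v}).ncard

/-- `G` is a cycle: it is connected, has at least one edge, and every vertex has
degree two. -/
def IsCycleGraph (G : Graph α β) : Prop :=
  G.E.Nonempty ∧ G.Connected ∧ ∀ v ∈ G.V, G.degree v = 2

/-- `C` is (the edge set of) a cycle of `G`. -/
def CycleSet (G : Graph α β) (C : Set β) : Prop :=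
  C ⊆ G.E ∧ (G.restrictEdges C).IsCycleGraph

/-- A forest: a graph with no cycles (in particular no loop-edges). -/
def IsForest (G : Graph α β) : Prop := ∀ C, ¬ G.CycleSet C

/-- `H` is a subgraph of `G`. -/
def IsSubgraph (H G : Graph α β) : Prop := H.V ⊆ G.V ∧ H.E ⊆ G.E ∧ H.ends = G.ends

/-- `G` is `k`-connected if `G − X` is connected for every vertex set `X` with `|X| < k`. -/
def KConnected (G : Graph α β) (k : ℕ) : Prop :=
  ∀ X : Set α, X.encard < k → (G.deleteVertices X).Connected

/-- A theta: a `2`-connected graph with exactly two vertices of degree three, all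
other vertices having degree two. -/
def IsTheta (H : Graph α β) : Prop :=
  H.KConnected 2 ∧
    ∃ a ∈ H.V, ∃ b ∈ H.V, a ≠ b ∧ H.degree a = 3 ∧ H.degree b = 3 ∧
      ∀ v ∈ H.V, v ≠ a → v ≠ b → H.degree v = 2

/-- `G / e`: contract the non-loop edge `e` with endpoints `x` and `y`
(identifying `y` with `x` and deleting `e`). -/
noncomputable def contractEdge (G : Graph α β) (e : β) (x y : α) (he : e ∈ G.E)
    (hxy : G.ends e = s(x, y)) (hne : x ≠ y) : Graph α β where
  V := G.V \ {y}
  E := G.E \ {e}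
  ends := fun f => (G.ends f).map (fun w => if w = y then x else w)
  finV := G.finV.diff
  finE := G.finE.diff
  ends_mem := by
    rintro f ⟨hf, -⟩ z hz
    try dsimp only at hz
    rw [Sym2.mem_map] at hz
    obtain ⟨w, hw, rfl⟩ := hz
    by_cases hwy : w = y
    · rw [if_pos hwy]
      have hx : x ∈ G.ends e := by rw [hxy]; exact Sym2.mem_mk_left x y
      exact ⟨G.ends_mem he hx, by simp [hne]⟩
    · rw [if_neg hwy]
      exact ⟨G.ends_mem hf hw, by simp [hwy]⟩

/-- `G ∘ e`: for a loop-edge `e` at a vertex `v` which is the unique loop-edge at `v`,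
delete `v` and `e`, and replace every other edge `f = vw` at `v` by a loop-edge at `w`. -/
noncomputable def circ (G : Graph α β) (e : β) (v : α)
    (hno : ∀ f ∈ G.E, G.ends f = Sym2.diag v → f = e) : Graph α β where
  V := G.V \ {v}
  E := G.E \ {e}
  ends := fun f =>
    if h : f ∈ G.E ∧ f ≠ e ∧ v ∈ G.ends f then Sym2.diag (Sym2.Mem.other h.2.2)
    else G.ends f
  finV := G.finV.diff
  finE := G.finE.diff
  ends_mem := by
    rintro f ⟨hf, hfe⟩ z hz
    try dsimp only at hz
    have hfe' : f ≠ e := fun h' => hfe (by simp [h'])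
    by_cases h : f ∈ G.E ∧ f ≠ e ∧ v ∈ G.ends f
    · rw [dif_pos h] at hz
      have hze : z = Sym2.Mem.other h.2.2 := by
        have h2 : z ∈ s(Sym2.Mem.other h.2.2, Sym2.Mem.other h.2.2) := hz
        rw [Sym2.mem_iff] at h2
        tauto
      subst hze
      refine ⟨G.ends_mem hf (Sym2.other_mem h.2.2), ?_⟩
      simp only [mem_singleton_iff]
      intro hzv
      apply h.2.1
      apply hno f hf
      show G.ends f = s(v, v)
      rw [← Sym2.other_spec h.2.2, hzv]
    · rw [dif_neg h] at hz
      refine ⟨G.ends_mem hf hz, ?_⟩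
      simp only [mem_singleton_iff]
      intro hzv
      subst hzv
      exact h ⟨hf, hfe', hz⟩

end Graph

/-! ### Matroid notions -/

variable {α : Type u} {β : Type v}

/-- The rank `r_M(X)` of a set `X` in a matroid `M`: the maximum size of an
independent subset of `X`. -/
noncomputable def rank (M : Matroid β) (X : Set β) : ℕ :=
  (⨆ I ∈ {I : Set β | M.Indep I ∧ I ⊆ X}, I.encard).toNat

/-- `C` is a circuit of `M` : a minimal dependent set. -/
def IsCircuit (M : Matroid β) (C : Set β) : Prop :=
  M.Dep C ∧ ∀ D, D ⊂ C → M.Indep D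

/-- `M \ D` : delete the set `D` from the matroid `M`. -/
def deleteM (M : Matroid β) (D : Set β) : Matroid β := M ↾ (M.E \ D)

/-- `M / C` : contract the set `C` in the matroid `M`. -/
def contractM (M : Matroid β) (C : Set β) : Matroid β := (M✶ ↾ (M✶.E \ C))✶

/-- `G` is a weak framework for `M`: conditions (1)–(3). -/
def WeakFramework (G : Graph α β) (M : Matroid β) : Prop :=
  G.E = M.E ∧
  (∀ H : Graph α β, H.IsComponentOf G → rank M H.E ≤ H.V.ncard) ∧
  (∀ v ∈ G.V,
    M.closure (G.deleteVertex v).E ⊆ (G.deleteVertex v).E ∪ G.loopsAt v)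

/-- `G` is a framework for `M`: conditions (1)–(4). -/
def Framework (G : Graph α β) (M : Matroid β) : Prop :=
  WeakFramework G M ∧
    ∀ C, IsCircuit M C → (G.restrictEdges C).AtMostTwoComponents

/-- `M` is the cycle matroid `M(G)` of `G` : the ground set of `M` is `E(G)`, and the
circuits of `M` are exactly the edge sets of cycles of `G`. -/
def IsCycleMatroidOf (G : Graph α β) (M : Matroid β) : Prop :=
  M.E = G.E ∧ ∀ C, IsCircuit M C ↔ G.CycleSet C

/-- A matroid is graphic if it is the cycle matroid of some graph. -/
def Graphic (M : Matroid β) : Prop :=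
  ∃ (γ : Type v) (G : Graph γ β), IsCycleMatroidOf G M

/-- A matroid is quasi-graphic if it has a framework. -/
def QuasiGraphic (M : Matroid β) : Prop :=
  ∃ (γ : Type v) (G : Graph γ β), Framework G M

/-- `M` is a lift of `N` if some single-element extension `M'` of `M` satisfies
`M' \ e = M` and `M' / e = N`. -/
def IsLiftOf (M N : Matroid β) : Prop :=
  ∃ M' : Matroid (Option β), (none : Option β) ∈ M'.E ∧
    deleteM M' {none} = M.map some (Option.some_injective β).injOn ∧
    contractM M' {none} = N.map some (Option.some_injective β).injOn

/-- `M` is a lifted-graphic matroid: for some single-element extension `M'` of `M`,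
`M' / e` is graphic. -/
def LiftedGraphic (M : Matroid β) : Prop :=
  ∃ M' : Matroid (Option β), (none : Option β) ∈ M'.E ∧
    deleteM M' {none} = M.map some (Option.some_injective β).injOn ∧
    Graphic (contractM M' {none})

/-- `(M, V)` is a framed matroid: `V` is a basis of `M` and every element of `M` is
spanned by a subset of `V` with at most two elements. -/
def FramedMatroid {γ : Type u} (M : Matroid γ) (V : Set γ) : Prop :=
  M.IsBase V ∧ ∀ e ∈ M.E, ∃ S ⊆ V, S.ncard ≤ 2 ∧ e ∈ M.closure S

/-- `M` is a frame matroid: `M = M' \ V` for some framed matroid `(M', V)`. -/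
def FrameMatroid (M : Matroid β) : Prop :=
  ∃ (γ : Type v) (M' : Matroid (β ⊕ γ)) (V : Set (β ⊕ γ)),
    FramedMatroid M' V ∧
      deleteM M' V = M.map Sum.inl Sum.inl_injective.injOn

/-- `M` is `3`-connected: it has no `k`-separation for `k ≤ 2`. -/
def ThreeConnected (M : Matroid β) : Prop :=
  ∀ X ⊆ M.E, ∀ k : ℕ, k ≤ 2 → (k : ℕ∞) ≤ X.encard → (k : ℕ∞) ≤ (M.E \ X).encard →
    rank M M.E + k ≤ rank M X + rank M (M.E \ X)

/-- `M` is representable over some field. -/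
def Representable (M : Matroid β) : Prop :=
  ∃ (F : Type v) (_ : Field F) (W : Type v) (_ : AddCommGroup W) (_ : Module F W)
    (φ : β → W), ∀ I ⊆ M.E, (M.Indep I ↔ LinearIndependent F (fun x : I => φ x))

/-- A collection `B` of cycles of `G` satisfies the theta-property if there is no
theta-subgraph of `G` with exactly two of its three cycles in `B`. -/
def ThetaProperty (G : Graph α β) (B : Set (Set β)) : Prop :=
  ∀ H : Graph α β, H.IsSubgraph G → H.IsTheta →
    ∀ C1 C2 C3, H.CycleSet C1 → H.CycleSet C2 → H.CycleSet C3 →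
      C1 ≠ C2 → C2 ≠ C3 → C1 ≠ C3 → C1 ∈ B → C2 ∈ B → C3 ∈ B

/-- Along a walk from inside `S` to outside `S` there is a crossing step. -/
private lemma cross_step {R : α → α → Prop} {S : Set α} {a b : α}
    (h : Relation.ReflTransGen R a b) (ha : a ∈ S) :
    b ∉ S → ∃ x ∈ S, ∃ y, y ∉ S ∧ R x y := by
  induction h with
  | refl => exact fun hb => absurd ha hb
  | @tail c d h1 h2 ih =>
    intro hd
    by_cases hc : c ∈ S
    · exact ⟨c, hc, d, hd, h2⟩
    · exact ih hc

/-- A basis' of `X` has maximum `encard` among independent subsets of `X`. -/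
private lemma encard_le_of_basis' {M : Matroid β} {I J X : Set β}
    (hI : M.IsBasis' I X) (hJ : M.Indep J) (hJX : J ⊆ X) : J.encard ≤ I.encard := by
  by_contra hlt
  push_neg at hlt
  obtain ⟨e, he, hins⟩ := hI.indep.augment hJ hlt
  have heq := hI.eq_of_subset_indep hins (subset_insert _ _)
    (insert_subset (hJX he.1) hI.subset)
  exact he.2 (by rw [heq]; exact mem_insert _ _)

private lemma rank_iSup_eq {M : Matroid β} {I X : Set β} (hI : M.IsBasis' I X) :
    (⨆ J ∈ {J : Set β | M.Indep J ∧ J ⊆ X}, J.encard) = I.encard := by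
  apply le_antisymm
  · exact iSup₂_le fun J hJ => encard_le_of_basis' hI hJ.1 hJ.2
  · exact le_iSup₂_of_le I ⟨hI.indep, hI.subset⟩ le_rfl

private lemma rank_eq_ncard_of_basis' {M : Matroid β} {I X : Set β} (hI : M.IsBasis' I X) :
    rank M X = I.ncard := by
  rw [Set.ncard_def]
  simp only [rank, rank_iSup_eq hI]

/-- The key growing argument: an independent set of edges spanned inside a
nonempty vertex set `S` can be extended by one independent edge for each
vertex of `G` outside `S`. -/
private lemma grow_indep (G : Graph α β) (M : Matroid β) (hwf : WeakFramework G M)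
    (hconn : G.Connected) :
    ∀ n : ℕ, ∀ S : Set α, (G.V \ S).ncard ≤ n → S ⊆ G.V → S.Nonempty →
      ∀ I : Set β, M.Indep I → I ⊆ G.E → (∀ e ∈ I, ∀ x ∈ G.ends e, x ∈ S) →
      ∃ J : Set β, M.Indep J ∧ J ⊆ G.E ∧ I.encard + (G.V \ S).encard ≤ J.encard := by
  intro n
  induction n with
  | zero =>
    intro S hcard hSV hSne I hI hIE hIS
    have hfin : (G.V \ S).Finite := G.finV.diff
    have hempty : G.V \ S = ∅ := by
      rw [← Set.ncard_eq_zero hfin]; omega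
    exact ⟨I, hI, hIE, by simp [hempty]⟩
  | succ n ih =>
    intro S hcard hSV hSne I hI hIE hIS
    rcases Set.eq_empty_or_nonempty (G.V \ S) with hdiff | ⟨w, hw⟩
    · exact ⟨I, hI, hIE, by simp [hdiff]⟩
    obtain ⟨u0, hu0⟩ := hSne
    obtain ⟨x, hxS, y, hyS, e, heE, hends⟩ :
        ∃ x ∈ S, ∃ y, y ∉ S ∧ ∃ e ∈ G.E, G.ends e = s(x, y) := by
      have hpath := hconn u0 (hSV hu0) w hw.1
      obtain ⟨x, hxS, y, hyS, e, heE, hends⟩ := cross_step hpath hu0 hw.2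
      exact ⟨x, hxS, y, hyS, e, heE, hends⟩
    have hymem : y ∈ G.ends e := by rw [hends]; exact Sym2.mem_mk_right x y
    have hyV : y ∈ G.V := G.ends_mem heE hymem
    have hxy : x ≠ y := fun h => hyS (h ▸ hxS)
    have heI : e ∉ I := fun h => hyS (hIS e h y hymem)
    have hIdel : I ⊆ (G.deleteVertex y).E := by
      intro f hf
      refine ⟨hIE hf, fun z hz hzy => ?_⟩
      rw [Set.mem_singleton_iff] at hzy
      exact hyS (hzy ▸ hIS f hf z hz)
    have hecl : e ∉ M.closure I := by
      intro hecl
      have h3 := hwf.2.2 y hyV (M.closure_subset_closure hIdel hecl)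
      rcases h3 with h | h
      · exact h.2 y hymem rfl
      · have hdiag : G.ends e = Sym2.diag y := h.2
        rw [hends] at hdiag
        have : x = y ∧ y = y ∨ x = y ∧ y = y := by
          rw [Sym2.diag] at hdiag
          exact Sym2.eq_iff.mp hdiag
        rcases this with ⟨h1, -⟩ | ⟨h1, -⟩ <;> exact hxy h1
    have heME : e ∈ M.E := hwf.1 ▸ heE
    have hins : M.Indep (insert e I) := by
      rw [hI.insert_indep_iff_of_notMem heI]
      exact ⟨heME, hecl⟩
    have hdiffeq : G.V \ insert y S = (G.V \ S) \ {y} := by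
      ext z
      simp only [Set.mem_diff, Set.mem_insert_iff, Set.mem_singleton_iff]
      tauto
    have hcard' : (G.V \ insert y S).ncard ≤ n := by
      have hlt : ((G.V \ S) \ {y}).ncard < (G.V \ S).ncard :=
        Set.ncard_diff_singleton_lt_of_mem ⟨hyV, hyS⟩ G.finV.diff
      rw [hdiffeq]; omega
    have hIS' : ∀ f ∈ insert e I, ∀ z ∈ G.ends f, z ∈ insert y S := by
      intro f hf z hz
      rcases hf with rfl | hf
      · rw [hends] at hz
        rw [Sym2.mem_iff] at hz
        rcases hz with rfl | rfl
        · exact Or.inr hxS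
        · exact Or.inl rfl
      · exact Or.inr (hIS f hf z hz)
    obtain ⟨J, hJ, hJE, hle⟩ := ih (insert y S) hcard' (insert_subset hyV hSV)
      ⟨y, mem_insert _ _⟩ (insert e I) hins (insert_subset heE hIE) hIS'
    refine ⟨J, hJ, hJE, ?_⟩
    refine le_trans (le_of_eq ?_) hle
    have he1 : (insert e I).encard = I.encard + 1 := Set.encard_insert_of_notMem heI
    have he2 : ((G.V \ S) \ {y}).encard + 1 = (G.V \ S).encard :=
      Set.encard_diff_singleton_add_one ⟨hyV, hyS⟩
    rw [he1, hdiffeq, ← he2]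
    ring

/-- Let `G` be a connected weak framework for a matroid `M` and let `H`
be a non-empty subgraph of `G`. Then `|V(H)| − r_M(E(H)) ≥ |V(G)| − r(M)`. -/
theorem statement6 {α : Type u} {β : Type v} (G H : Graph α β) (M : Matroid β)
    (hwf : WeakFramework G M) (hconn : G.Connected)
    (hH : H.IsSubgraph G) (hne : H.V.Nonempty) :
    (G.V.ncard : ℤ) - (rank M M.E : ℤ) ≤ (H.V.ncard : ℤ) - (rank M H.E : ℤ) := by
  obtain ⟨hVsub, hEsub, hendsH⟩ := hH
  obtain ⟨I0, hI0⟩ := M.exists_isBasis' H.E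
  have hI0E : I0 ⊆ G.E := hI0.subset.trans hEsub
  have hI0fin : I0.Finite := G.finE.subset hI0E
  obtain ⟨J, hJ, hJE, hle⟩ := grow_indep G M hwf hconn (G.V \ H.V).ncard H.V le_rfl
    hVsub hne I0 hI0.indep hI0E
    (fun e he z hz => H.ends_mem (hI0.subset he) (by rw [hendsH]; exact hz))
  obtain ⟨I1, hI1⟩ := M.exists_isBasis' M.E
  have hI1fin : I1.Finite := G.finE.subset (by rw [hwf.1]; exact hI1.subset)
  have hJME : J ⊆ M.E := by rw [← hwf.1]; exact hJE
  have hJle : J.encard ≤ I1.encard := encard_le_of_basis' hI1 hJ hJME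
  have hrH : rank M H.E = I0.ncard := rank_eq_ncard_of_basis' hI0
  have hrM : rank M M.E = I1.ncard := rank_eq_ncard_of_basis' hI1
  have hVfin : (G.V \ H.V).Finite := G.finV.diff
  have hmain : I0.ncard + (G.V \ H.V).ncard ≤ I1.ncard := by
    have h1 : (I0.ncard : ℕ∞) + ((G.V \ H.V).ncard : ℕ∞) ≤ (I1.ncard : ℕ∞) := by
      rw [hI0fin.cast_ncard_eq, hVfin.cast_ncard_eq, hI1fin.cast_ncard_eq]
      exact le_trans hle hJle
    rw [← Nat.cast_add, Nat.cast_le] at h1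
    exact h1
  have hdiff : (G.V \ H.V).ncard = G.V.ncard - H.V.ncard :=
    Set.ncard_diff hVsub (G.finV.subset hVsub)
  have hVle : H.V.ncard ≤ G.V.ncard := Set.ncard_le_ncard hVsub G.finV
  rw [hrH, hrM]
  omega

end QuasiGraphicPaper
end

section
/- Let G be a weak framework for a matroid M. If H is a subgraph of G with |E(H)| > |V(H)|, then E(H) is a dependent set of M. -/
open Set Matroid
open scoped Classical

namespace QuasiGraphicPaper

universe u v

/-! ### Matroid notions -/

variable {α : Type u} {β : Type v}

/-! ### Auxiliary rank lemmas -/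

section Aux

/-- The `ℕ∞`-valued rank. -/
noncomputable def erk (M : Matroid β) (X : Set β) : ℕ∞ :=
  ⨆ I ∈ {I : Set β | M.Indep I ∧ I ⊆ X}, I.encard

lemma rank_eq_toNat_erk (M : Matroid β) (X : Set β) : rank M X = (erk M X).toNat := rfl

lemma le_erk {M : Matroid β} {I X : Set β} (hI : M.Indep I) (hIX : I ⊆ X) :
    I.encard ≤ erk M X := le_iSup₂_of_le I ⟨hI, hIX⟩ le_rfl

lemma erk_mono {M : Matroid β} {X Y : Set β} (h : X ⊆ Y) : erk M X ≤ erk M Y :=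
  iSup₂_le fun I hI => le_erk hI.1 (hI.2.trans h)

lemma erk_le_encard (M : Matroid β) (X : Set β) : erk M X ≤ X.encard :=
  iSup₂_le fun _ hI => encard_mono hI.2

lemma encard_le_basis' {M : Matroid β} {I J Y : Set β} (hJ : M.IsBasis' J Y)
    (hI : M.Indep I) (hIY : I ⊆ Y) : I.encard ≤ J.encard := by
  by_contra hlt
  push_neg at hlt
  obtain ⟨e, he, hins⟩ := hJ.indep.augment hI hlt
  have := hJ.eq_of_subset_indep hins (subset_insert _ _)
    (insert_subset (hIY he.1) hJ.subset)
  exact he.2 (this ▸ mem_insert _ _)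

lemma erk_eq_basis' {M : Matroid β} {J Y : Set β} (hJ : M.IsBasis' J Y) :
    erk M Y = J.encard :=
  le_antisymm (iSup₂_le fun _ hI => encard_le_basis' hJ hI.1 hI.2)
    (le_erk hJ.indep hJ.subset)

lemma erk_union_le (M : Matroid β) (A B : Set β) :
    erk M (A ∪ B) ≤ erk M A + erk M B := by
  refine iSup₂_le fun I hI => ?_
  calc I.encard = ((I ∩ A) ∪ (I \ A)).encard := by rw [Set.inter_union_diff]
    _ ≤ (I ∩ A).encard + (I \ A).encard := Set.encard_union_le _ _
    _ ≤ erk M A + erk M B := by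
        refine add_le_add (le_erk (hI.1.subset inter_subset_left) inter_subset_right)
          (le_erk (hI.1.subset diff_subset) ?_)
        intro x hx
        rcases hI.2 hx.1 with h | h
        · exact absurd h hx.2
        · exact h

lemma erk_add_one_le {M : Matroid β} {Y X : Set β} {e : β}
    (hYX : Y ⊆ X) (heX : e ∈ X) (heE : e ∈ M.E) (he : e ∉ M.closure Y) :
    erk M Y + 1 ≤ erk M X := by
  obtain ⟨J, hJ⟩ := M.exists_isBasis' Y
  have heJcl : e ∉ M.closure J := by rw [hJ.closure_eq_closure]; exact he
  have heJ : e ∉ J := fun h => heJcl (M.mem_closure_of_mem' h heE)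
  have hins : M.Indep (insert e J) := by
    rw [hJ.indep.insert_indep_iff]; exact Or.inl ⟨heE, heJcl⟩
  calc erk M Y + 1 = J.encard + 1 := by rw [erk_eq_basis' hJ]
    _ = (insert e J).encard := (Set.encard_insert_of_notMem heJ).symm
    _ ≤ erk M X := le_erk hins (insert_subset heX (hJ.subset.trans hYX))

/-! ### Auxiliary graph lemmas -/

/-- Edges of `G` with all endpoints inside `W`. -/
def edgesWithin (G : Graph α β) (W : Set α) : Set β :=
  {e ∈ G.E | ∀ u ∈ G.ends e, u ∈ W}

lemma Graph.adj_symm (G : Graph α β) {u v : α} (h : G.Adj u v) : G.Adj v u := by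
  obtain ⟨e, he, hends⟩ := h
  exact ⟨e, he, by rw [hends, Sym2.eq_swap]⟩

lemma reach_symm (G : Graph α β) {u v : α} (h : Relation.ReflTransGen G.Adj u v) :
    Relation.ReflTransGen G.Adj v u :=
  haveI : Std.Symm G.Adj := ⟨fun _ _ hadj => G.adj_symm hadj⟩
  Relation.ReflTransGen.symmetric.symm _ _ h

lemma exists_crossing {G : Graph α β} {W : Set α} {u v : α}
    (h : Relation.ReflTransGen G.Adj u v) (hu : u ∈ W) (hv : v ∉ W) :
    ∃ a b, G.Adj a b ∧ a ∈ W ∧ b ∉ W ∧ Relation.ReflTransGen G.Adj u a ∧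
      Relation.ReflTransGen G.Adj u b := by
  induction h with
  | refl => exact absurd hu hv
  | @tail b c hub hbc ih =>
    by_cases hb : b ∈ W
    · exact ⟨b, c, hbc, hb, hv, hub, hub.tail hbc⟩
    · obtain ⟨a', b', h1, h2, h3, h4, h5⟩ := ih hb
      exact ⟨a', b', h1, h2, h3, h4, h5⟩

lemma componentOf_V_subset (G : Graph α β) (x : α) : (G.componentOf x).V ⊆ G.V :=
  fun _ h => h.1

lemma componentOf_E_subset (G : Graph α β) (x : α) : (G.componentOf x).E ⊆ G.E :=
  fun _ h => h.1

/-- Key single-component bound: the rank of the edges of a component lying inside a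
vertex set `W` is at most the number of component vertices in `W`. -/
lemma comp_bound {G : Graph α β} {M : Matroid β} (h : WeakFramework G M) {x : α}
    (hx : x ∈ G.V) :
    ∀ n (W : Set α), ((G.componentOf x).V \ W).ncard = n →
      erk M ((G.componentOf x).E ∩ edgesWithin G W)
        ≤ ((G.componentOf x).V ∩ W).encard := by
  set C := G.componentOf x with hC
  intro n
  induction n with
  | zero =>
    intro W hW
    have hVW : C.V ⊆ W := by
      have hfin : (C.V \ W).Finite := C.finV.diff
      have : C.V \ W = ∅ := (Set.ncard_eq_zero hfin).mp hW
      intro z hz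
      by_contra hzW
      exact absurd (this ▸ ⟨hz, hzW⟩) (Set.notMem_empty z)
    have hVeq : C.V ∩ W = C.V := inter_eq_self_of_subset_left hVW
    rw [hVeq]
    have h2 : rank M C.E ≤ C.V.ncard := h.2.1 C ⟨x, hx, rfl⟩
    have hne : erk M C.E ≠ ⊤ := by
      refine ne_top_of_le_ne_top ?_ (erk_le_encard M C.E)
      exact C.finE.encard_lt_top.ne
    have herk : erk M C.E ≤ (C.V.ncard : ℕ∞) := by
      rw [← ENat.coe_toNat hne, ← rank_eq_toNat_erk]
      exact_mod_cast h2
    have hVcard : (C.V.ncard : ℕ∞) = C.V.encard := by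
      rw [Set.ncard_def, ENat.coe_toNat C.finV.encard_lt_top.ne]
    exact le_trans (erk_mono inter_subset_left) (hVcard ▸ herk)
  | succ n ih =>
    intro W hW
    have hfinVW : (C.V \ W).Finite := C.finV.diff
    have hne : (C.V \ W).Nonempty := by
      rw [← Set.ncard_pos hfinVW, hW]; omega
    obtain ⟨v₀, hv₀⟩ := hne
    by_cases hCW : (C.V ∩ W).Nonempty
    · obtain ⟨u, hu⟩ := hCW
      have hreach : Relation.ReflTransGen G.Adj u v₀ :=
        (reach_symm G hu.1.2).trans hv₀.1.2
      obtain ⟨a, b, hab, haW, hbW, hua, hub⟩ := exists_crossing hreach hu.2 hv₀.2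
      obtain ⟨e, heG, hends⟩ := hab
      have haV : a ∈ G.V := G.ends_mem heG (by rw [hends]; exact Sym2.mem_mk_left a b)
      have hbV : b ∈ G.V := G.ends_mem heG (by rw [hends]; exact Sym2.mem_mk_right a b)
      have hxa : Relation.ReflTransGen G.Adj x a := hu.1.2.trans hua
      have hxb : Relation.ReflTransGen G.Adj x b := hu.1.2.trans hub
      have hbC : b ∈ C.V := ⟨hbV, hxb⟩
      have hanb : a ≠ b := fun hab' => hbW (hab' ▸ haW)
      have heC : e ∈ C.E := by
        refine ⟨heG, fun z hz => ?_⟩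
        rw [hends, Sym2.mem_iff] at hz
        rcases hz with rfl | rfl
        · exact hxa
        · exact hxb
      -- apply the inductive hypothesis with `W' = insert b W`
      have hdiff : C.V \ insert b W = (C.V \ W) \ {b} := by
        ext z
        simp only [Set.mem_diff, Set.mem_insert_iff, Set.mem_singleton_iff]
        tauto
      have hcard' : (C.V \ insert b W).ncard = n := by
        rw [hdiff, Set.ncard_diff_singleton_of_mem ((Set.mem_diff b).mpr ⟨hbC, hbW⟩),
          hW]
        omega
      have hIH := ih (insert b W) hcard'
      have hVins : C.V ∩ insert b W = insert b (C.V ∩ W) := by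
        ext z
        simp only [Set.mem_inter_iff, Set.mem_insert_iff]
        constructor
        · rintro ⟨hz, rfl | hz'⟩
          · exact Or.inl rfl
          · exact Or.inr ⟨hz, hz'⟩
        · rintro (rfl | ⟨hz, hz'⟩)
          · exact ⟨hbC, Or.inl rfl⟩
          · exact ⟨hz, Or.inr hz'⟩
      have hbnotin : b ∉ C.V ∩ W := fun hmem => hbW hmem.2
      have hIH' : erk M (C.E ∩ edgesWithin G (insert b W))
          ≤ (C.V ∩ W).encard + 1 := by
        rw [hVins, Set.encard_insert_of_notMem hbnotin] at hIH
        exact hIH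
      -- the rank-drop step
      have hYsub : C.E ∩ edgesWithin G W ⊆ (G.deleteVertex b).E := by
        rintro f ⟨-, hfG, hf⟩
        exact ⟨hfG, fun z hz hzb => hbW (by
          rw [Set.mem_singleton_iff] at hzb
          exact hzb ▸ hf z hz)⟩
      have hecl : e ∉ M.closure (C.E ∩ edgesWithin G W) := by
        intro hecl
        have h3 := h.2.2 b hbV
        have : e ∈ (G.deleteVertex b).E ∪ G.loopsAt b :=
          h3 (M.closure_subset_closure hYsub hecl)
        rcases this with hdel | hloop
        · exact hdel.2 b (by rw [hends]; exact Sym2.mem_mk_right a b) rfl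
        · have : G.ends e = Sym2.diag b := hloop.2
          rw [hends] at this
          exact hanb (by
            have := Sym2.eq_iff.mp this
            tauto)
      have heE : e ∈ M.E := h.1 ▸ heG
      have heW' : e ∈ C.E ∩ edgesWithin G (insert b W) := by
        refine ⟨heC, heG, fun z hz => ?_⟩
        rw [hends, Sym2.mem_iff] at hz
        rcases hz with rfl | rfl
        · exact Or.inr haW
        · exact Or.inl rfl
      have hYsub' : C.E ∩ edgesWithin G W ⊆ C.E ∩ edgesWithin G (insert b W) :=
        inter_subset_inter_right _ (fun f hf => ⟨hf.1, fun z hz => Or.inr (hf.2 z hz)⟩)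
      have hdrop := erk_add_one_le hYsub' heW' heE hecl
      have := le_trans hdrop hIH'
      exact (WithTop.add_le_add_iff_right (by simp : (1 : ℕ∞) ≠ ⊤)).mp this
    · -- the component misses `W` entirely : no relevant edges
      have hempty : C.E ∩ edgesWithin G W = ∅ := by
        ext f
        simp only [Set.mem_inter_iff, Set.mem_empty_iff_false, iff_false, not_and]
        intro hfC hfW
        have hp : (G.ends f).out.1 ∈ G.ends f := Sym2.out_fst_mem _
        have h1 : (G.ends f).out.1 ∈ C.V := C.ends_mem hfC hp
        have h2 : (G.ends f).out.1 ∈ W := hfW.2 _ hp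
        exact hCW ⟨_, h1, h2⟩
      rw [hempty]
      simpa using le_trans (erk_le_encard M ∅) (by simp)

/-- Union over components. -/
lemma union_bound {G : Graph α β} {M : Matroid β} (h : WeakFramework G M) (W : Set α)
    {S : Set α} (hSfin : S.Finite) :
    S ⊆ G.V →
      erk M (⋃ x ∈ S, ((G.componentOf x).E ∩ edgesWithin G W))
        ≤ (⋃ x ∈ S, ((G.componentOf x).V ∩ W)).encard := by
  induction S, hSfin using Set.Finite.induction_on with
  | empty => simp [erk_le_encard, le_trans (erk_le_encard M ∅)]
  | @insert y S hyS hSfin ih =>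
    intro hsub
    have hyV : y ∈ G.V := hsub (mem_insert _ _)
    have hsub' : S ⊆ G.V := fun z hz => hsub (mem_insert_of_mem _ hz)
    rw [Set.biUnion_insert, Set.biUnion_insert]
    by_cases hyin : ∃ z ∈ S, y ∈ (G.componentOf z).V
    · obtain ⟨z, hzS, hyz⟩ := hyin
      have hcompV : (G.componentOf y).V = (G.componentOf z).V := by
        ext w
        simp only [Graph.componentOf]
        refine and_congr_right fun _ => ⟨fun hw => hyz.2.trans hw,
          fun hw => ((reach_symm G hyz.2).trans hw)⟩
      have hcompE : (G.componentOf y).E = (G.componentOf z).E := by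
        ext f
        simp only [Graph.componentOf]
        refine and_congr_right fun _ =>
          ⟨fun hw w hwf => hyz.2.trans (hw w hwf),
           fun hw w hwf => (reach_symm G hyz.2).trans (hw w hwf)⟩
      have hEsub : (G.componentOf y).E ∩ edgesWithin G W
          ⊆ ⋃ x ∈ S, ((G.componentOf x).E ∩ edgesWithin G W) := by
        intro f hf
        exact Set.mem_biUnion hzS (hcompE ▸ hf)
      have hVsub : (G.componentOf y).V ∩ W
          ⊆ ⋃ x ∈ S, ((G.componentOf x).V ∩ W) := by
        intro w hw
        exact Set.mem_biUnion hzS (hcompV ▸ hw)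
      rw [Set.union_eq_self_of_subset_left hEsub,
        Set.union_eq_self_of_subset_left hVsub]
      exact ih hsub'
    · push_neg at hyin
      have hdisj : Disjoint ((G.componentOf y).V ∩ W)
          (⋃ x ∈ S, ((G.componentOf x).V ∩ W)) := by
        rw [Set.disjoint_left]
        rintro w ⟨hwy, -⟩ hwS
        rw [Set.mem_iUnion₂] at hwS
        obtain ⟨z, hzS, hwz⟩ := hwS
        refine hyin z hzS ⟨hyV, ?_⟩
        exact hwz.1.2.trans (reach_symm G hwy.2)
      calc erk M (((G.componentOf y).E ∩ edgesWithin G W)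
            ∪ ⋃ x ∈ S, ((G.componentOf x).E ∩ edgesWithin G W))
          ≤ erk M ((G.componentOf y).E ∩ edgesWithin G W)
            + erk M (⋃ x ∈ S, ((G.componentOf x).E ∩ edgesWithin G W)) :=
            erk_union_le M _ _
        _ ≤ ((G.componentOf y).V ∩ W).encard
            + (⋃ x ∈ S, ((G.componentOf x).V ∩ W)).encard :=
            add_le_add (comp_bound h hyV _ W rfl) (ih hsub')
        _ = (((G.componentOf y).V ∩ W)
            ∪ ⋃ x ∈ S, ((G.componentOf x).V ∩ W)).encard :=
            (Set.encard_union_eq hdisj).symm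

end Aux

/-- Let `G` be a weak framework for a matroid `M`. If `H` is a subgraph
of `G` with `|E(H)| > |V(H)|`, then `E(H)` is a dependent set of `M`. -/
theorem statement9 {α : Type u} {β : Type v} (G H : Graph α β) (M : Matroid β)
    (h : WeakFramework G M) (hsub : H.IsSubgraph G)
    (hcard : H.V.ncard < H.E.ncard) :
    M.Dep H.E := by
  have hEsub : H.E ⊆ M.E := h.1 ▸ hsub.2.1
  by_contra hdep
  have hind : M.Indep H.E := by
    by_contra hi
    exact hdep ⟨hi, hEsub⟩
  -- every edge of `H` lies in some component of `G`, within `W := H.V`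
  have hHsub : H.E ⊆ ⋃ x ∈ G.V, ((G.componentOf x).E ∩ edgesWithin G H.V) := by
    intro e he
    have heG : e ∈ G.E := hsub.2.1 he
    have hendsW : ∀ z ∈ G.ends e, z ∈ H.V := by
      intro z hz
      have : z ∈ H.ends e := by rw [hsub.2.2]; exact hz
      exact H.ends_mem he this
    obtain ⟨⟨p, q⟩, hpq⟩ := Quot.exists_rep (G.ends e)
    have hrep : G.ends e = s(p, q) := hpq.symm
    have hpV : p ∈ G.V := G.ends_mem heG (by rw [hrep]; exact Sym2.mem_mk_left p q)
    have hadj : G.Adj p q := ⟨e, heG, hrep⟩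
    refine Set.mem_biUnion hpV ⟨⟨heG, fun z hz => ?_⟩, heG, hendsW⟩
    rw [hrep, Sym2.mem_iff] at hz
    rcases hz with rfl | rfl
    · exact Relation.ReflTransGen.refl
    · exact Relation.ReflTransGen.single hadj
  have hchain : H.E.encard ≤ H.V.encard := by
    calc H.E.encard
        ≤ erk M (⋃ x ∈ G.V, ((G.componentOf x).E ∩ edgesWithin G H.V)) :=
          le_erk hind hHsub
      _ ≤ (⋃ x ∈ G.V, ((G.componentOf x).V ∩ H.V)).encard :=
          union_bound h H.V G.finV Set.Subset.rfl
      _ ≤ H.V.encard :=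
          encard_mono (Set.iUnion₂_subset fun _ _ => inter_subset_right)
  have : H.E.ncard ≤ H.V.ncard := by
    rw [Set.ncard_def, Set.ncard_def]
    exact ENat.toNat_le_toNat hchain H.finV.encard_lt_top.ne
  omega

end QuasiGraphicPaper
end

section
/- Let M be a 3-connected matroid with at least four elements. If G is a connected weak framework for M, then the graph G is 2-connected. -/
open Set Matroid
open scoped Classical

namespace QuasiGraphicPaper

universe u v

/-! ### Matroid notions -/

variable {α : Type u} {β : Type v}

/-! ### Auxiliary lemmas -/

section RankLemmas

variable {β : Type v} {M : Matroid β} {X Y J : Set β} {e : β}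

lemma rank_le_encard_ground : (⨆ I ∈ {I : Set β | M.Indep I ∧ I ⊆ X}, I.encard) ≤ M.E.encard :=
  iSup₂_le fun I hI => encard_mono hI.1.subset_ground

lemma ncard_le_rank (hfin : M.E.Finite) (hJ : M.Indep J) (hJX : J ⊆ X) :
    J.ncard ≤ rank M X := by
  have hle : J.encard ≤ ⨆ I ∈ {I : Set β | M.Indep I ∧ I ⊆ X}, I.encard :=
    le_iSup₂ (f := fun I _ => I.encard) J ⟨hJ, hJX⟩
  rw [Set.ncard_def, rank]
  exact ENat.toNat_le_toNat hle
    (lt_of_le_of_lt rank_le_encard_ground hfin.encard_lt_top).ne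

lemma rank_le_ncard (hX : X.Finite) : rank M X ≤ X.ncard := by
  rw [rank, Set.ncard_def]
  exact ENat.toNat_le_toNat (iSup₂_le fun I hI => encard_mono hI.2) hX.encard_lt_top.ne

lemma rank_mono (hfin : M.E.Finite) (hXY : X ⊆ Y) : rank M X ≤ rank M Y := by
  rw [rank, rank]
  refine ENat.toNat_le_toNat ?_
    (lt_of_le_of_lt rank_le_encard_ground hfin.encard_lt_top).ne
  exact iSup₂_le fun I hI => le_iSup₂ (f := fun I _ => I.encard) I ⟨hI.1, hI.2.trans hXY⟩

lemma exists_rank_basis (M : Matroid β) (hfin : M.E.Finite) (X : Set β) :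
    ∃ I, M.Indep I ∧ I ⊆ X ∧ I.Finite ∧ rank M X = I.ncard := by
  obtain ⟨I, hI⟩ := M.exists_isBasis' X
  have hIfin : I.Finite := hfin.subset hI.indep.subset_ground
  refine ⟨I, hI.indep, hI.subset, hIfin, le_antisymm ?_ (ncard_le_rank hfin hI.indep hI.subset)⟩
  rw [rank, Set.ncard_def]
  refine ENat.toNat_le_toNat ?_ hIfin.encard_lt_top.ne
  refine iSup₂_le fun J hJ => ?_
  by_contra hlt
  push_neg at hlt
  obtain ⟨f, hf, hind⟩ := hI.indep.augment hJ.1 hlt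
  exact hI.insert_not_indep ⟨hJ.2 hf.1, hf.2⟩ hind

lemma rank_insert_of_not_mem_closure (hfin : M.E.Finite) (he : e ∈ M.E)
    (hecl : e ∉ M.closure X) : rank M X + 1 ≤ rank M (insert e X) := by
  obtain ⟨I, hind, hsub, hIfin, hrk⟩ := exists_rank_basis M hfin X
  have heI : e ∉ I := fun hmem => hecl (M.mem_closure_of_mem' (hsub hmem) he)
  have hins : M.Indep (insert e I) := by
    rw [hind.insert_indep_iff_of_notMem heI]
    exact ⟨he, fun hmem => hecl (M.closure_subset_closure hsub hmem)⟩
  have hle := ncard_le_rank hfin hins (insert_subset_insert hsub)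
  rwa [ncard_insert_of_notMem heI hIfin, ← hrk] at hle

lemma enat_le_one_of_lt_two {c : ℕ∞} (h : c < 2) : c ≤ 1 := by
  induction c using ENat.recTopCoe with
  | top => exact absurd h (by simp)
  | coe n =>
    have : n < 2 := by exact_mod_cast h
    exact_mod_cast Nat.lt_succ_iff.1 this

end RankLemmas

namespace Graph

variable {α : Type u} {β : Type v} {G : Graph α β} {M : Matroid β}

lemma deleteVertices_E_subset (X : Set α) : (G.deleteVertices X).E ⊆ G.E :=
  sep_subset _ _

lemma deleteVertices_E_mono {X Y : Set α} (h : X ⊆ Y) :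
    (G.deleteVertices Y).E ⊆ (G.deleteVertices X).E :=
  fun _ he => ⟨he.1, fun x hx hxX => he.2 x hx (h hxX)⟩

lemma deleteVertices_empty_E : (G.deleteVertices ∅).E = G.E := by
  ext e; simp [deleteVertices]

/-- `n`-step walks. -/
def Steps (G : Graph α β) : ℕ → α → α → Prop
  | 0, a, b => a = b
  | n + 1, a, b => ∃ c, G.Adj a c ∧ Steps G n c b

lemma steps_of_reach {a b : α} (h : Relation.ReflTransGen G.Adj a b) :
    ∃ n, G.Steps n a b := by
  induction h using Relation.ReflTransGen.head_induction_on with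
  | refl => exact ⟨0, rfl⟩
  | head hab _ ih => obtain ⟨n, hn⟩ := ih; exact ⟨n + 1, _, hab, hn⟩

lemma reach_of_steps : ∀ {n : ℕ} {a b : α}, G.Steps n a b → Relation.ReflTransGen G.Adj a b
  | 0, a, b, h => by rw [show a = b from h]
  | n + 1, a, b, h => by
    obtain ⟨c, hac, h'⟩ := h
    exact Relation.ReflTransGen.head hac (reach_of_steps h')

/-- Distance to a fixed vertex `v`. -/
noncomputable def dist (G : Graph α β) (v u : α) : ℕ := sInf {n | G.Steps n u v}

lemma exists_closer_edge {v u : α} (hreach : Relation.ReflTransGen G.Adj u v) (huv : u ≠ v) :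
    ∃ e w, e ∈ G.E ∧ G.ends e = s(u, w) ∧ w ≠ u ∧
      Relation.ReflTransGen G.Adj w v ∧ G.dist v w < G.dist v u := by
  have hne : {n | G.Steps n u v}.Nonempty := steps_of_reach hreach
  have hmem : G.Steps (G.dist v u) u v := Nat.sInf_mem hne
  obtain ⟨m, hm⟩ : ∃ m, G.dist v u = m + 1 := by
    cases h : G.dist v u with
    | zero => rw [h] at hmem; exact absurd hmem huv
    | succ m => exact ⟨m, rfl⟩
  rw [hm] at hmem
  obtain ⟨c, ⟨e, he, hends⟩, hsteps⟩ := hmem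
  have hdc : G.dist v c ≤ m := Nat.sInf_le hsteps
  have hlt : G.dist v c < G.dist v u := by omega
  have hcu : c ≠ u := fun h => by rw [h] at hlt; omega
  exact ⟨e, c, he, hends, hcu, reach_of_steps hsteps, hlt⟩

lemma not_mem_closure_of_incident (h : WeakFramework G M) {X : Set α} {e : β} {u w : α}
    (he : e ∈ G.E) (hends : G.ends e = s(u, w)) (huw : u ≠ w) (hu : u ∈ X) :
    e ∉ M.closure (G.deleteVertices X).E := by
  intro hcl
  have huV : u ∈ G.V := G.ends_mem he (by rw [hends]; exact Sym2.mem_mk_left u w)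
  have hsub : (G.deleteVertices X).E ⊆ (G.deleteVertex u).E := by
    intro f hf
    refine ⟨hf.1, fun x hx hxu => hf.2 x hx ?_⟩
    rw [mem_singleton_iff] at hxu
    rwa [hxu]
  have hmem := h.2.2 u huV (M.closure_subset_closure hsub hcl)
  rcases hmem with hE | hloop
  · exact hE.2 u (by rw [hends]; exact Sym2.mem_mk_left u w) rfl
  · have hdiag : s(u, w) = s(u, u) := by rw [← hends]; exact hloop.2
    rw [Sym2.eq_iff] at hdiag
    rcases hdiag with ⟨-, hwu⟩ | ⟨-, hwu⟩ <;> exact huw hwu.symm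

lemma rank_deleteVertices_add_le (h : WeakFramework G M) {v : α} (hv : v ∈ G.V)
    {S : Set α} (hSV : S ⊆ G.V) (hvS : v ∉ S)
    (hreach : ∀ u ∈ S, Relation.ReflTransGen G.Adj u v) :
    rank M (G.deleteVertices S).E + S.ncard ≤ rank M G.E := by
  have hfin : M.E.Finite := h.1 ▸ G.finE
  have hSfin : S.Finite := G.finV.subset hSV
  suffices H : ∀ k (X : Set α), X ⊆ S → X.ncard = k →
      (∀ x ∈ X, ∀ y ∈ S \ X, G.dist v y ≤ G.dist v x) →
      rank M (G.deleteVertices X).E + k ≤ rank M G.E by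
    exact H S.ncard S Subset.rfl rfl (fun x _ y hy => (hy.2 hy.1).elim)
  intro k
  induction k with
  | zero =>
    intro X hXS hX0 _
    have hXe : X = ∅ := (ncard_eq_zero (hSfin.subset hXS)).1 hX0
    subst hXe
    rw [deleteVertices_empty_E]
    omega
  | succ k ih =>
    intro X hXS hXcard hinv
    have hXfin : X.Finite := hSfin.subset hXS
    have hXne : X.Nonempty := by
      rw [← Set.ncard_pos hXfin, hXcard]; omega
    obtain ⟨u, huX, humin⟩ := Set.exists_min_image X (G.dist v) hXfin hXne
    have hX'card : (X \ {u}).ncard = k := by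
      rw [ncard_diff_singleton_of_mem huX, hXcard]
      omega
    have hinv' : ∀ x ∈ X \ {u}, ∀ y ∈ S \ (X \ {u}), G.dist v y ≤ G.dist v x := by
      intro x hx y hy
      by_cases hyX : y ∈ X
      · have hyu : y = u := by
          by_contra hne
          exact hy.2 ⟨hyX, hne⟩
        rw [hyu]
        exact humin x hx.1
      · exact hinv x hx.1 y ⟨hy.1, hyX⟩
    have ihX' := ih (X \ {u}) (fun z hz => hXS hz.1) hX'card hinv'
    have huv : u ≠ v := fun hh => hvS (hXS (hh ▸ huX))
    obtain ⟨e, w, he, hends, hwu, hwr, hwlt⟩ :=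
      exists_closer_edge (hreach u (hXS huX)) huv
    have hwX : w ∉ X := fun hwX => by have := humin w hwX; omega
    have heX' : e ∈ (G.deleteVertices (X \ {u})).E := by
      refine ⟨he, fun x hx hxX' => ?_⟩
      rw [hends, Sym2.mem_iff] at hx
      rcases hx with rfl | rfl
      · exact hxX'.2 rfl
      · exact hwX hxX'.1
    have hecl : e ∉ M.closure (G.deleteVertices X).E :=
      not_mem_closure_of_incident h he hends (Ne.symm hwu) huX
    have hsub2 : insert e (G.deleteVertices X).E ⊆ (G.deleteVertices (X \ {u})).E :=
      insert_subset heX' (deleteVertices_E_mono diff_subset)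
    have hstep := (rank_insert_of_not_mem_closure hfin (h.1 ▸ he) hecl).trans
      (rank_mono hfin hsub2)
    omega

lemma connected_deleteVertices_of_eq {X : Set α} (hconn : G.Connected)
    (hV : (G.deleteVertices X).V = G.V) (hE : (G.deleteVertices X).E = G.E) :
    (G.deleteVertices X).Connected := by
  intro a ha b hb
  rw [hV] at ha hb
  refine Relation.ReflTransGen.mono ?_ a b (hconn a ha b hb)
  rintro p q ⟨f, hf, hends⟩
  exact ⟨f, by rw [hE]; exact hf, hends⟩

end Graph

/-- Let `M` be a `3`-connected matroid with at least four elements. If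
`G` is a connected weak framework for `M`, then the graph `G` is `2`-connected. -/
theorem statement15 {α : Type u} {β : Type v} (G : Graph α β) (M : Matroid β)
    (h3 : ThreeConnected M) (hcard : 4 ≤ M.E.encard)
    (h : WeakFramework G M) (hconn : G.Connected) :
    G.KConnected 2 := by
  have hME : M.E = G.E := h.1.symm
  have hfin : M.E.Finite := h.1 ▸ G.finE
  intro X hX
  have hX1 : X.encard ≤ 1 := enat_le_one_of_lt_two (by exact_mod_cast hX)
  rcases Set.encard_le_one_iff_eq.1 hX1 with rfl | ⟨v, rfl⟩
  · refine Graph.connected_deleteVertices_of_eq hconn ?_ Graph.deleteVertices_empty_E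
    show G.V \ ∅ = G.V
    exact diff_empty
  by_cases hv : v ∈ G.V
  swap
  · refine Graph.connected_deleteVertices_of_eq hconn ?_ ?_
    · show G.V \ {v} = G.V
      exact diff_singleton_eq_self hv
    · ext e
      constructor
      · exact fun he => he.1
      · intro he
        refine ⟨he, fun z hz hzv => hv ?_⟩
        rw [mem_singleton_iff] at hzv
        rw [← hzv]
        exact G.ends_mem he hz
  by_contra hnc
  unfold Graph.Connected at hnc
  push_neg at hnc
  obtain ⟨x, hxV, y, hyV, hxy⟩ := hnc
  set Gv := G.deleteVertices {v} with hGv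
  set A : Set α := {u | u ∈ Gv.V ∧ Relation.ReflTransGen Gv.Adj x u} with hA
  set B : Set α := Gv.V \ A with hB
  have hxA : x ∈ A := ⟨hxV, Relation.ReflTransGen.refl⟩
  have hyB : y ∈ B := ⟨hyV, fun hyA => hxy hyA.2⟩
  have hAsub : A ⊆ G.V \ {v} := fun u hu => hu.1
  have hBsub : B ⊆ G.V \ {v} := fun u hu => hu.1
  have hAV : A ⊆ G.V := fun u hu => (hAsub hu).1
  have hBV : B ⊆ G.V := fun u hu => (hBsub hu).1
  have hAv : v ∉ A := fun hva => (hAsub hva).2 rfl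
  have hBv : v ∉ B := fun hvb => (hBsub hvb).2 rfl
  have hdisj : Disjoint A B := disjoint_sdiff_right
  have hAfin : A.Finite := G.finV.subset hAV
  have hBfin : B.Finite := G.finV.subset hBV
  have hAcl : ∀ p q : α, p ∈ A → Gv.Adj p q → q ∈ A := by
    intro p q hp hpq
    obtain ⟨f, hf, hends⟩ := hpq
    have hqV : q ∈ Gv.V := Gv.ends_mem hf (by rw [hends]; exact Sym2.mem_mk_right p q)
    exact ⟨hqV, hp.2.tail ⟨f, hf, hends⟩⟩
  have hGvE : ∀ f : β, f ∈ G.E → (∀ z ∈ G.ends f, z ≠ v) → f ∈ Gv.E := by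
    intro f hf hz
    exact ⟨hf, fun z hzm hzv => hz z hzm (mem_singleton_iff.1 hzv)⟩
  set E1 : Set β := (G.deleteVertices B).E with hE1
  set E2 : Set β := G.E \ E1 with hE2
  have hE1G : E1 ⊆ G.E := Graph.deleteVertices_E_subset B
  have hreachA : ∀ u ∈ A, Relation.ReflTransGen G.Adj u v := fun u hu => hconn u (hAV hu) v hv
  have hreachB : ∀ u ∈ B, Relation.ReflTransGen G.Adj u v := fun u hu => hconn u (hBV hu) v hv
  have f1 : rank M E1 + B.ncard ≤ rank M G.E :=
    Graph.rank_deleteVertices_add_le h hv hBV hBv hreachB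
  have f2 : E2 ⊆ (G.deleteVertices A).E := by
    intro e he
    have hex : ∃ p ∈ G.ends e, p ∈ B := by
      by_contra hnex
      push_neg at hnex
      exact he.2 ⟨he.1, hnex⟩
    obtain ⟨p, hpm, hpB⟩ := hex
    refine ⟨he.1, fun q hqm hqA => ?_⟩
    have hqp : q ≠ p := hdisj.ne_of_mem hqA hpB
    have hends : G.ends e = s(q, p) := (Sym2.mem_and_mem_iff hqp).1 ⟨hqm, hpm⟩
    have hadj : Gv.Adj q p := by
      refine ⟨e, hGvE e he.1 ?_, hends⟩
      intro z hzm
      rw [hends, Sym2.mem_iff] at hzm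
      rcases hzm with rfl | rfl
      · exact fun hzv => (hAsub hqA).2 (mem_singleton_iff.2 hzv)
      · exact fun hzv => (hBsub hpB).2 (mem_singleton_iff.2 hzv)
    exact hpB.2 (hAcl q p hqA hadj)
  have f3 : rank M E2 + A.ncard ≤ rank M G.E := by
    have hdel := Graph.rank_deleteVertices_add_le h hv hAV hAv hreachA
    have hmono := rank_mono hfin f2
    omega
  have hEcomp : (G.componentOf v).E = G.E := by
    ext e
    constructor
    · exact fun he => he.1
    · exact fun he => ⟨he, fun z hz => hconn v hv z (G.ends_mem he hz)⟩
  have hVcomp : (G.componentOf v).V = G.V := by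
    ext u
    constructor
    · exact fun hu => hu.1
    · exact fun hu => ⟨hu, hconn v hv u hu⟩
  have f4 : rank M G.E ≤ G.V.ncard := by
    have hcmp := h.2.1 (G.componentOf v) ⟨v, hv, rfl⟩
    rwa [hEcomp, hVcomp] at hcmp
  have hVeq : G.V = insert v (A ∪ B) := by
    ext u
    constructor
    · intro hu
      by_cases huv : u = v
      · rw [huv]; exact mem_insert _ _
      · refine mem_insert_iff.2 (Or.inr ?_)
        by_cases huA : u ∈ A
        · exact mem_union_left _ huA
        · exact mem_union_right _ ⟨⟨hu, fun hm => huv (mem_singleton_iff.1 hm)⟩, huA⟩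
    · intro hu
      rcases mem_insert_iff.1 hu with rfl | hu
      · exact hv
      · rcases hu with hu | hu
        · exact hAV hu
        · exact hBV hu
  have hvAB : v ∉ A ∪ B := fun hm => hm.elim hAv hBv
  have f5 : G.V.ncard = A.ncard + B.ncard + 1 := by
    rw [hVeq, ncard_insert_of_notMem hvAB (hAfin.union hBfin), ncard_union_eq hdisj hAfin hBfin]
  have ha1 : 0 < A.ncard := (Set.ncard_pos hAfin).2 ⟨x, hxA⟩
  have hb1 : 0 < B.ncard := (Set.ncard_pos hBfin).2 ⟨y, hyB⟩
  have hxv : x ≠ v := fun hh => hxV.2 (mem_singleton_iff.2 hh)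
  have hyv : y ≠ v := fun hh => hyV.2 (mem_singleton_iff.2 hh)
  have hE1ne : E1.Nonempty := by
    obtain ⟨e, w, he, hends, hwx, -, -⟩ := Graph.exists_closer_edge (hconn x hxV.1 v hv) hxv
    have hwB : w ∉ B := by
      by_cases hwv : w = v
      · rw [hwv]; exact hBv
      · intro hwB
        have hadj : Gv.Adj x w := by
          refine ⟨e, hGvE e he ?_, hends⟩
          intro z hzm
          rw [hends, Sym2.mem_iff] at hzm
          rcases hzm with rfl | rfl
          · exact hxv
          · exact hwv
        exact hwB.2 (hAcl x w hxA hadj)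
    refine ⟨e, he, fun z hz hzB => ?_⟩
    rw [hends, Sym2.mem_iff] at hz
    rcases hz with rfl | rfl
    · exact hzB.2 hxA
    · exact hwB hzB
  have hE2ne : E2.Nonempty := by
    obtain ⟨e, w, he, hends, -, -, -⟩ := Graph.exists_closer_edge (hconn y hyV.1 v hv) hyv
    refine ⟨e, he, fun heE1 => ?_⟩
    exact heE1.2 y (by rw [hends]; exact Sym2.mem_mk_left y w) hyB
  have hE1fin : E1.Finite := G.finE.subset hE1G
  have hE2fin : E2.Finite := G.finE.subset diff_subset
  have hMEdiff : M.E \ E1 = E2 := by rw [hME]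
  have hE1M : E1 ⊆ M.E := by rw [hME]; exact hE1G
  have hrME : rank M M.E = rank M G.E := by rw [hME]
  by_cases h2 : 2 ≤ E1.encard ∧ 2 ≤ E2.encard
  · have h3c := h3 E1 hE1M 2 le_rfl (by exact_mod_cast h2.1) (by rw [hMEdiff]; exact_mod_cast h2.2)
    rw [hrME, hMEdiff] at h3c
    omega
  · rw [not_and_or] at h2
    have h3c := h3 E1 hE1M 1 (by omega) (by exact_mod_cast Set.one_le_encard_iff_nonempty.2 hE1ne)
      (by rw [hMEdiff]; exact_mod_cast Set.one_le_encard_iff_nonempty.2 hE2ne)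
    rw [hrME, hMEdiff] at h3c
    rcases h2 with h2 | h2
    · have hle : E1.encard ≤ 1 := enat_le_one_of_lt_two (lt_of_not_ge h2)
      have hn1 : E1.ncard ≤ 1 := by
        have hnn := ENat.toNat_le_toNat hle (by simp : (1 : ℕ∞) ≠ ⊤)
        simpa [Set.ncard_def] using hnn
      have hr1 : rank M E1 ≤ 1 := (rank_le_ncard hE1fin).trans hn1
      omega
    · have hle : E2.encard ≤ 1 := enat_le_one_of_lt_two (lt_of_not_ge h2)
      have hn1 : E2.ncard ≤ 1 := by
        have hnn := ENat.toNat_le_toNat hle (by simp : (1 : ℕ∞) ≠ ⊤)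
        simpa [Set.ncard_def] using hnn
      have hr2 : rank M E2 ≤ 1 := (rank_le_ncard hE2fin).trans hn1
      omega

end QuasiGraphicPaper
end
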